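/- Let P be a real polynomial of degree at most D, where D ≥ 1 is an integer, and let k be an integer with 1 ≤ k ≤ D. If S ≥ 0 satisfies |P(1/n)| ≤ S for every integer n ≥ D², then for every t ∈ [0, 1/(2D²)] the k-th derivative of P satisfies |P^{(k)}(t)| ≤ (2^{2k+1} · D^{4k} / (2k−1)!!) · S, where (2k−1)!! := ∏_{j=1}^{k} (2j−1). -/

import Mathlib

open Polynomial Finset Real Polynomial.Chebyshev

set_option maxHeartbeats 2000000

namespace Stmt2Aux

noncomputable def cheb1 (D k : ℕ) : ℝ := (derivative^[k] (T ℝ (D : ℤ))).eval 1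


lemma iter_deriv_sum {ι : Type*} (s : Finset ι) (f : ι → ℝ[X]) (k : ℕ) :
    derivative^[k] (∑ i ∈ s, f i) = ∑ i ∈ s, derivative^[k] (f i) := by
  induction k with
  | zero => simp
  | succ k ih =>
    simp only [Function.iterate_succ_apply', ih, derivative_sum]

lemma iter_deriv_comp_linear (p : ℝ[X]) (u v : ℝ) (k : ℕ) :
    derivative^[k] (p.comp (C u * X + C v))
      = C (u ^ k) * (derivative^[k] p).comp (C u * X + C v) := by
  induction k with
  | zero => simp
  | succ k ih =>
    rw [Function.iterate_succ_apply', ih, derivative_C_mul, derivative_comp]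
    rw [Function.iterate_succ_apply']
    simp only [derivative_add, derivative_mul, derivative_C, derivative_X, zero_mul, mul_one,
      zero_add, add_zero]
    rw [← mul_assoc, ← Polynomial.C_mul, ← pow_succ]

lemma iter_deriv_eval_nonneg (s : Finset ℕ) (v : ℕ → ℝ) (c : ℝ) (hv : ∀ j ∈ s, v j ≤ c) (k : ℕ) :
    0 ≤ (derivative^[k] (∏ j ∈ s, (X - C (v j)))).eval c := by
  have key : ∀ n, 0 ≤ (Polynomial.taylor c (∏ j ∈ s, (X - C (v j)))).coeff n := by
    apply Finset.prod_induction (p := fun f : ℝ[X] => ∀ n, 0 ≤ (Polynomial.taylor c f).coeff n)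
    · intro a b ha hb n
      rw [Polynomial.taylor_mul, Polynomial.coeff_mul]
      exact Finset.sum_nonneg fun x _ => mul_nonneg (ha x.1) (hb x.2)
    · intro n
      rw [Polynomial.taylor_one]
      simp only [coeff_C]
      split <;> norm_num
    · intro j hj n
      have : Polynomial.taylor c (X - C (v j)) = X + C (c - v j) := by
        simp [Polynomial.taylor_apply, sub_comp]
        ring
      rw [this]
      rcases n with _ | n
      · simp [sub_nonneg.mpr (hv j hj)]
      · rcases n with _ | n <;> simp [coeff_X, Polynomial.coeff_C]
  have h1 : (derivative^[k] (∏ j ∈ s, (X - C (v j)))).eval c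
      = (k.factorial : ℝ) * (Polynomial.taylor c (∏ j ∈ s, (X - C (v j)))).coeff k := by
    rw [Polynomial.taylor_coeff, ← Polynomial.factorial_smul_hasseDeriv]
    simp [mul_comm]
  rw [h1]
  exact mul_nonneg (by positivity) (key k)





lemma cheb_ode (D : ℕ) :
    (1 - X ^ 2 : ℝ[X]) * derivative^[2] (T ℝ (D : ℤ))
      = X * derivative (T ℝ (D : ℤ)) - ((D : ℝ[X])) ^ 2 * T ℝ (D : ℤ) := by
  have h1 := T_derivative_eq_U (R := ℝ) (D : ℤ)
  have h2 := add_one_mul_T_eq_poly_in_U (R := ℝ) ((D : ℤ) - 1)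
  rw [sub_add_cancel] at h2
  have h3 := congr_arg derivative h1
  rw [derivative_mul, derivative_intCast, zero_mul, zero_add] at h3
  have h5 : derivative^[2] (T ℝ (D : ℤ)) = derivative (derivative (T ℝ (D : ℤ))) := rfl
  have hC : ((D : ℝ[X])) ^ 2 = ((D : ℤ) : ℝ[X]) * ((D : ℤ) : ℝ[X]) := by
    push_cast
    ring
  rw [h5, hC]
  have h4 : ((((D : ℤ) - 1 : ℤ)) : ℝ[X]) + 1 = ((D : ℤ) : ℝ[X]) := by push_cast; ring
  rw [h4] at h2
  linear_combination (1 - X ^ 2 : ℝ[X]) * h3 + ((D : ℤ) : ℝ[X]) * h2 - (X : ℝ[X]) * h1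


lemma cheb_ode_iter (D j : ℕ) :
    (1 - X ^ 2 : ℝ[X]) * derivative^[j + 2] (T ℝ (D : ℤ))
      = (2 * (j : ℝ[X]) + 1) * X * derivative^[j + 1] (T ℝ (D : ℤ))
        - ((D : ℝ[X]) ^ 2 - (j : ℝ[X]) ^ 2) * derivative^[j] (T ℝ (D : ℤ)) := by
  induction j with
  | zero =>
    simpa using cheb_ode D
  | succ j ih =>
    have h := congr_arg derivative ih
    have hA : ∀ m : ℕ, derivative (derivative^[m] (T ℝ (D : ℤ))) = derivative^[m + 1] (T ℝ (D : ℤ)) :=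
      fun m => (Function.iterate_succ_apply' derivative m _).symm
    simp only [derivative_mul, derivative_sub, derivative_add, derivative_one, derivative_X,
      derivative_pow, derivative_natCast, derivative_ofNat, Nat.cast_ofNat, mul_zero, zero_mul,
      zero_add, add_zero, mul_one, zero_sub, sub_zero] at h
    rw [hA (j+2), hA (j+1), hA j] at h
    simp only [map_ofNat] at h
    push_cast
    push_cast at h
    linear_combination h

lemma cheb1_zero (D : ℕ) : cheb1 D 0 = 1 := by
  have h := Polynomial.Chebyshev.T_real_cos 0 (D : ℤ)
  simp only [Real.cos_zero, mul_zero] at h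
  simpa [cheb1] using h

lemma cheb1_rec (D j : ℕ) :
    (2 * (j : ℝ) + 1) * cheb1 D (j + 1) = ((D : ℝ) ^ 2 - (j : ℝ) ^ 2) * cheb1 D j := by
  have h := congr_arg (fun p : ℝ[X] => p.eval 1) (cheb_ode_iter D j)
  simp only [eval_mul, eval_sub, eval_add, eval_one, eval_pow, eval_X, eval_natCast,
    eval_ofNat] at h
  rw [show ((1:ℝ) - 1 ^ 2) = 0 by norm_num, zero_mul] at h
  have h2 : (0:ℝ) = (2 * (j:ℝ) + 1) * cheb1 D (j + 1) - ((D : ℝ) ^ 2 - (j : ℝ) ^ 2) * cheb1 D j := by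
    simpa [cheb1] using h
  linarith

lemma cheb1_nonneg_le (D : ℕ) : ∀ k, k ≤ D →
    0 ≤ cheb1 D k ∧ cheb1 D k * ∏ j ∈ Finset.range k, (2 * (j : ℝ) + 1) ≤ (D : ℝ) ^ (2 * k) := by
  intro k
  induction k with
  | zero => intro _; simp [cheb1_zero]
  | succ k ih =>
    intro hk
    obtain ⟨h0, h1⟩ := ih (le_trans (Nat.le_succ k) hk)
    have hrec := cheb1_rec D k
    have hkD : (k : ℝ) ^ 2 ≤ (D : ℝ) ^ 2 := by
      have : (k : ℝ) ≤ (D : ℝ) := by exact_mod_cast le_trans (Nat.le_succ k) hk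
      nlinarith [Nat.cast_nonneg (α := ℝ) k]
    have hpos : (0:ℝ) < 2 * (k : ℝ) + 1 := by positivity
    constructor
    · have : (0:ℝ) ≤ ((D : ℝ) ^ 2 - (k : ℝ) ^ 2) * cheb1 D k := by
        apply mul_nonneg (by linarith) h0
      nlinarith
    · rw [Finset.prod_range_succ]
      have key : cheb1 D (k + 1) * ((∏ j ∈ Finset.range k, (2 * (j : ℝ) + 1)) * (2 * (k:ℝ) + 1))
          = ((D : ℝ) ^ 2 - (k : ℝ) ^ 2) * (cheb1 D k * ∏ j ∈ Finset.range k, (2 * (j : ℝ) + 1)) := by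
        linear_combination (∏ j ∈ Finset.range k, (2 * (j : ℝ) + 1)) * hrec
      rw [key]
      have hprodnn : (0:ℝ) ≤ ∏ j ∈ Finset.range k, (2 * (j : ℝ) + 1) :=
        Finset.prod_nonneg fun i _ => by positivity
      have : ((D : ℝ) ^ 2 - (k : ℝ) ^ 2) * (cheb1 D k * ∏ j ∈ Finset.range k, (2 * (j : ℝ) + 1))
          ≤ (D : ℝ) ^ 2 * (D : ℝ) ^ (2 * k) := by
        apply mul_le_mul (by nlinarith) h1 (mul_nonneg h0 hprodnn) (by positivity)
      calc _ ≤ (D : ℝ) ^ 2 * (D : ℝ) ^ (2 * k) := this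
        _ = (D : ℝ) ^ (2 * (k + 1)) := by rw [← pow_add]; ring_nf





lemma natDegree_T_le : ∀ n : ℕ, (T ℝ (n : ℤ)).natDegree ≤ n := by
  intro n
  induction n using Nat.strong_induction_on with
  | _ n ih =>
    match n with
    | 0 => simp [T_zero]
    | 1 => simp [T_one]
    | (m+2) =>
      rw [show ((m+2:ℕ):ℤ) = (m:ℤ)+2 by push_cast; ring, T_add_two]
      apply le_trans (natDegree_sub_le _ _)
      have h1 : (2 * X * T ℝ ((m:ℤ)+1)).natDegree ≤ m + 2 := by
        apply le_trans (natDegree_mul_le)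
        have h2 : (2 * X : ℝ[X]).natDegree ≤ 1 :=
          le_trans natDegree_mul_le (by simp)
        have h3 : (T ℝ ((m:ℤ)+1)).natDegree ≤ m + 1 := by
          have := ih (m+1) (by omega)
          rwa [show (((m+1):ℕ):ℤ) = (m:ℤ)+1 by push_cast; ring] at this
        omega
      have h4 : (T ℝ (m:ℤ)).natDegree ≤ m := ih m (by omega)
      simp only [max_le_iff]
      exact ⟨h1, by omega⟩

lemma T_eval_node (D i : ℕ) (hD : 1 ≤ D) :
    (T ℝ (D : ℤ)).eval (Real.cos (i * π / D)) = (-1 : ℝ) ^ i := by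
  have hDne : (D : ℝ) ≠ 0 := by positivity
  have h := T_real_cos ((i : ℝ) * π / D) (D : ℤ)
  have harg : ((D : ℤ) : ℝ) * ((i : ℝ) * π / D) = (i : ℝ) * π := by
    push_cast
    field_simp
  rw [harg] at h
  have hcos : Real.cos ((i : ℝ) * π) = (-1 : ℝ) ^ i := by
    have := Real.cos_nat_mul_pi_sub 0 i
    simpa using this
  rw [h, hcos]


lemma core_markov (D k : ℕ) (hD : 1 ≤ D) (hk : k ≤ D) (q : ℝ[X]) (hq : q.natDegree ≤ D)
    (M : ℝ) (hM : ∀ x ∈ Set.Icc (-1:ℝ) 1, |q.eval x| ≤ M) :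
    |(derivative^[k] q).eval 1| ≤ cheb1 D k * M := by
  classical
  set s : Finset ℕ := Finset.range (D + 1) with hs
  set v : ℕ → ℝ := fun i => Real.cos (i * π / D) with hv
  have hDpos : (0:ℝ) < D := by exact_mod_cast hD
  have hmono : ∀ {i j : ℕ}, j ∈ s → i < j → v j < v i := by
    intro i j hj hij
    apply Real.cos_lt_cos_of_nonneg_of_le_pi
    · positivity
    · rw [div_le_iff₀ hDpos]
      have : (j:ℝ) ≤ D := by
        have := Finset.mem_range.mp hj
        exact_mod_cast Nat.lt_succ_iff.mp this
      nlinarith [Real.pi_pos]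
    · have hij' : (i:ℝ) < j := by exact_mod_cast hij
      have hpi := Real.pi_pos
      apply div_lt_div_of_pos_right ?_ hDpos
      · nlinarith
  have hinj : Set.InjOn v s := by
    intro a ha b hb hab
    by_contra hne
    rcases Nat.lt_or_ge a b with h | h
    · exact absurd hab (ne_of_gt (hmono (Finset.mem_coe.mp hb) h))
    · have h' : b < a := by omega
      exact absurd hab (ne_of_gt (hmono (Finset.mem_coe.mp ha) h')).symm
  have hvle : ∀ j, v j ≤ 1 := fun j => Real.cos_le_one _
  have hcard : s.card = D + 1 := Finset.card_range _
  have hdeglt : ∀ r : ℝ[X], r.natDegree ≤ D → r.degree < (s.card : ℕ) := by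
    intro r hr
    rw [hcard]
    apply lt_of_le_of_lt degree_le_natDegree
    exact_mod_cast Nat.lt_succ_of_le hr
  set N : ℕ → ℝ[X] := fun i => ∏ j ∈ s.erase i, (X - C (v j)) with hN
  set d : ℕ → ℝ := fun i => ∏ j ∈ s.erase i, (v i - v j) with hd
  have hbasis : ∀ i, Lagrange.basis s v i = C ((d i)⁻¹) * N i := by
    intro i
    rw [Lagrange.basis, hN, hd]
    simp only [Lagrange.basisDivisor]
    rw [Finset.prod_mul_distrib, ← Finset.prod_inv_distrib, map_prod (C : ℝ →+* ℝ[X]) (fun j => (v i - v j)⁻¹) (s.erase i)]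
  -- sign of d
  have hdsign : ∀ i ∈ s, 0 < (-1:ℝ)^i * d i := by
    intro i hi
    have hiD : i ≤ D := Nat.lt_succ_iff.mp (Finset.mem_range.mp hi)
    have hsplit : s.erase i = Finset.range i ∪ Finset.Ioc i D := by
      ext a
      simp only [Finset.mem_erase, Finset.mem_range, Finset.mem_union, Finset.mem_Ioc, hs]
      omega
    have hdisj : Disjoint (Finset.range i) (Finset.Ioc i D) := by
      rw [Finset.disjoint_left]
      intro a ha ha'
      simp only [Finset.mem_range] at ha
      simp only [Finset.mem_Ioc] at ha'
      omega
    have hdi : d i = (∏ j ∈ Finset.range i, (v i - v j)) * ∏ j ∈ Finset.Ioc i D, (v i - v j) := by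
      rw [hd]
      simp only
      rw [hsplit, Finset.prod_union hdisj]
    have hA : ∏ j ∈ Finset.range i, (v i - v j) = (-1:ℝ)^i * ∏ j ∈ Finset.range i, (v j - v i) := by
      rw [show ∀ J : Finset ℕ, (∏ j ∈ J, (v i - v j)) = ∏ j ∈ J, (-1) * (v j - v i) from
        fun J => Finset.prod_congr rfl (fun j _ => by ring)]
      rw [Finset.prod_mul_distrib, Finset.prod_const, Finset.card_range]
    have hApos : 0 < ∏ j ∈ Finset.range i, (v j - v i) := by
      apply Finset.prod_pos
      intro j hj
      have hj' : j < i := Finset.mem_range.mp hj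
      have : v i < v j := hmono hi hj'
      linarith
    have hBpos : 0 < ∏ j ∈ Finset.Ioc i D, (v i - v j) := by
      apply Finset.prod_pos
      intro j hj
      have hj' := Finset.mem_Ioc.mp hj
      have hjs : j ∈ s := by
        rw [hs]
        exact Finset.mem_range.mpr (by omega)
      have : v j < v i := hmono hjs hj'.1
      linarith
    have hsq : (-1:ℝ)^i * (-1:ℝ)^i = 1 := by
      rw [← pow_add]
      exact Even.neg_one_pow ⟨i, by ring⟩
    rw [hdi, hA]
    calc (0:ℝ) < (∏ j ∈ Finset.range i, (v j - v i)) * ∏ j ∈ Finset.Ioc i D, (v i - v j) :=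
          mul_pos hApos hBpos
      _ = (-1:ℝ)^i * ((-1:ℝ)^i * (∏ j ∈ Finset.range i, (v j - v i))
            * ∏ j ∈ Finset.Ioc i D, (v i - v j)) := by
          rw [show ∀ x y : ℝ, (-1:ℝ)^i * ((-1:ℝ)^i * x * y) = ((-1:ℝ)^i * (-1:ℝ)^i) * (x * y) from
            fun x y => by ring, hsq, one_mul]
  set F : ℝ[X] → ℝ := fun p => (derivative^[k] p).eval 1 with hF
  have hFN : ∀ i, 0 ≤ F (N i) := by
    intro i
    exact iter_deriv_eval_nonneg _ _ _ (fun j _ => hvle j) k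
  have hFint : ∀ r : ℕ → ℝ,
      F (Lagrange.interpolate s v r) = ∑ i ∈ s, r i * ((d i)⁻¹ * F (N i)) := by
    intro r
    rw [Lagrange.interpolate_apply]
    have : ∀ i ∈ s, C (r i) * Lagrange.basis s v i = C (r i * (d i)⁻¹) * N i := by
      intro i _
      rw [hbasis i, ← mul_assoc, ← Polynomial.C_mul]
    rw [Finset.sum_congr rfl this, hF]
    simp only
    rw [iter_deriv_sum]
    rw [eval_finset_sum]
    apply Finset.sum_congr rfl
    intro i _
    rw [iterate_derivative_C_mul, eval_mul, eval_C]
    ring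
  -- q as interpolation
  have hqI := Lagrange.eq_interpolate hinj (hdeglt q hq)
  have hqexp : F q = ∑ i ∈ s, q.eval (v i) * ((d i)⁻¹ * F (N i)) := by
    conv_lhs => rw [hqI]
    exact hFint _
  -- T as interpolation
  have hTI : T ℝ (D : ℤ) = Lagrange.interpolate s v (fun i => (-1:ℝ)^i) := by
    apply Lagrange.eq_interpolate_of_eval_eq _ hinj (hdeglt _ (natDegree_T_le D))
    intro i _
    exact T_eval_node D i hD
  have hTexp : cheb1 D k = ∑ i ∈ s, (-1:ℝ)^i * ((d i)⁻¹ * F (N i)) := by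
    have : cheb1 D k = F (T ℝ (D : ℤ)) := rfl
    rw [this, hTI]
    exact hFint _
  have habs : ∀ i ∈ s, |q.eval (v i) * ((d i)⁻¹ * F (N i))|
      ≤ M * ((-1:ℝ)^i * ((d i)⁻¹ * F (N i))) := by
    intro i hi
    have hdi := hdsign i hi
    have hplop : |(d i)⁻¹| = (-1:ℝ)^i * (d i)⁻¹ := by
      have h1 : |d i| = (-1:ℝ)^i * d i := by
        rw [← abs_of_pos hdi, abs_mul, abs_pow, abs_neg, abs_one, one_pow, one_mul]
      rw [abs_inv, h1, mul_inv]
      congr 1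
      rcases Nat.even_or_odd i with he | ho
      · rw [he.neg_one_pow]; norm_num
      · rw [ho.neg_one_pow]; norm_num
    have hq1 : |q.eval (v i)| ≤ M := hM _ (Set.mem_Icc.mpr ⟨Real.neg_one_le_cos _, Real.cos_le_one _⟩)
    calc |q.eval (v i) * ((d i)⁻¹ * F (N i))|
        = |q.eval (v i)| * (|(d i)⁻¹| * F (N i)) := by
          rw [abs_mul, abs_mul, abs_of_nonneg (hFN i)]
      _ ≤ M * (|(d i)⁻¹| * F (N i)) := by
          apply mul_le_mul_of_nonneg_right hq1
          exact mul_nonneg (abs_nonneg _) (hFN i)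
      _ = M * ((-1:ℝ)^i * ((d i)⁻¹ * F (N i))) := by rw [hplop]; ring
  have final : |F q| ≤ cheb1 D k * M := by
    rw [hqexp]
    calc |∑ i ∈ s, q.eval (v i) * ((d i)⁻¹ * F (N i))|
        ≤ ∑ i ∈ s, |q.eval (v i) * ((d i)⁻¹ * F (N i))| := Finset.abs_sum_le_sum_abs _ _
      _ ≤ ∑ i ∈ s, M * ((-1:ℝ)^i * ((d i)⁻¹ * F (N i))) := Finset.sum_le_sum habs
      _ = M * ∑ i ∈ s, (-1:ℝ)^i * ((d i)⁻¹ * F (N i)) := by rw [Finset.mul_sum]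
      _ = cheb1 D k * M := by rw [← hTexp]; ring
  exact final

lemma markov_window (D k : ℕ) (hD : 1 ≤ D) (hk : k ≤ D) (p : ℝ[X]) (hp : p.natDegree ≤ D)
    (a b : ℝ) (hab : a < b) (M : ℝ)
    (hM : ∀ x ∈ Set.Icc a b, |p.eval x| ≤ M) (e : ℝ) (he : e = a ∨ e = b) :
    |(derivative^[k] p).eval e| ≤ (2 / (b - a)) ^ k * cheb1 D k * M := by
  set u : ℝ := if e = b then (b - a) / 2 else -((b - a) / 2) with hu
  set w : ℝ := (a + b) / 2 with hw
  have hblen : 0 < b - a := by linarith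
  have huabs : |u| = (b - a) / 2 := by
    rw [hu]
    split
    · exact abs_of_pos (by linarith)
    · rw [abs_neg]; exact abs_of_pos (by linarith)
  have hue : u * 1 + w = e := by
    rcases he with h | h
    · subst h
      rw [hu, hw]
      split_ifs with h'
      · linarith
      · ring
    · subst h
      rw [hu, hw]
      split_ifs with h'
      · ring
      · exact absurd rfl h'
  have himg : ∀ x ∈ Set.Icc (-1:ℝ) 1, u * x + w ∈ Set.Icc a b := by
    intro x hx
    obtain ⟨hx1, hx2⟩ := hx
    have hux : |u * x| ≤ (b - a) / 2 := by
      rw [abs_mul]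
      calc |u| * |x| ≤ |u| * 1 := by
            apply mul_le_mul_of_nonneg_left _ (abs_nonneg u)
            exact abs_le.mpr ⟨hx1, hx2⟩
        _ = (b - a) / 2 := by rw [mul_one, huabs]
    obtain ⟨hl, hr⟩ := abs_le.mp hux
    exact Set.mem_Icc.mpr ⟨by rw [hw]; linarith, by rw [hw]; linarith⟩
  set q : ℝ[X] := p.comp (C u * X + C w) with hq
  have hrdeg : (C u * X + C w : ℝ[X]).natDegree ≤ 1 := by
    apply le_trans (natDegree_add_le _ _)
    simp only [max_le_iff]
    constructor
    · exact le_trans (natDegree_C_mul_le _ _) (by rw [natDegree_X])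
    · rw [natDegree_C]; omega
  have hqdeg : q.natDegree ≤ D := by
    rw [hq, natDegree_comp]
    calc p.natDegree * (C u * X + C w : ℝ[X]).natDegree ≤ D * 1 :=
          Nat.mul_le_mul hp hrdeg
      _ = D := by omega
  have hqM : ∀ x ∈ Set.Icc (-1:ℝ) 1, |q.eval x| ≤ M := by
    intro x hx
    rw [hq, eval_comp]
    simp only [eval_add, eval_mul, eval_C, eval_X]
    exact hM _ (himg x hx)
  have hcore := core_markov D k hD hk q hqdeg M hqM
  have h1 : (derivative^[k] q).eval 1 = u ^ k * (derivative^[k] p).eval e := by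
    rw [hq, iter_deriv_comp_linear, eval_mul, eval_C, eval_comp]
    simp only [eval_add, eval_mul, eval_C, eval_X]
    rw [hue]
  have h2 : |u| ^ k * |(derivative^[k] p).eval e| ≤ cheb1 D k * M := by
    rw [← abs_pow, ← abs_mul, ← h1]
    exact hcore
  have hpk : (0:ℝ) < ((b - a) / 2) ^ k := by positivity
  calc |(derivative^[k] p).eval e|
      = (((b - a) / 2) ^ k)⁻¹ * (((b - a) / 2) ^ k * |(derivative^[k] p).eval e|) := by
        rw [← mul_assoc, inv_mul_cancel₀ (ne_of_gt hpk), one_mul]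
    _ ≤ (((b - a) / 2) ^ k)⁻¹ * (cheb1 D k * M) := by
        apply mul_le_mul_of_nonneg_left _ (inv_nonneg.mpr hpk.le)
        rw [← huabs]
        exact h2
    _ = (2 / (b - a)) ^ k * cheb1 D k * M := by
        rw [← inv_pow, inv_div]
        ring

lemma second_deriv_interp (P : ℝ[X]) (g₁ g₂ x₀ : ℝ) (h1 : g₁ < x₀) (h2 : x₀ < g₂) :
    ∃ ξ ∈ Set.Ioo g₁ g₂, P.eval x₀ = P.eval g₁
      + (P.eval g₂ - P.eval g₁) / (g₂ - g₁) * (x₀ - g₁)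
      + (derivative^[2] P).eval ξ / 2 * ((x₀ - g₁) * (x₀ - g₂)) := by
  have h12 : g₁ < g₂ := lt_trans h1 h2
  have hne : g₂ - g₁ ≠ 0 := by intro h; absurd h; linarith
  have hx1 : x₀ - g₁ ≠ 0 := by intro h; absurd h; linarith
  have hx2 : x₀ - g₂ ≠ 0 := by intro h; absurd h; linarith
  set α : ℝ := (P.eval g₂ - P.eval g₁) / (g₂ - g₁) with hα
  set c : ℝ := (P.eval x₀ - (P.eval g₁ + α * (x₀ - g₁))) * 2 / ((x₀ - g₁) * (x₀ - g₂)) with hc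
  set β₂ : ℝ := c / 2 with hβ₂
  set β₁ : ℝ := α - c / 2 * (g₁ + g₂) with hβ₁
  set β₀ : ℝ := P.eval g₁ - α * g₁ + c / 2 * (g₁ * g₂) with hβ₀
  set W : ℝ[X] := P - (C β₀ + C β₁ * X + C β₂ * (X * X)) with hW
  have hWc : ∀ x : ℝ, W.eval x = P.eval x - (β₀ + β₁ * x + β₂ * (x * x)) := by
    intro x
    rw [hW]
    simp [eval_sub, eval_add, eval_mul, eval_C, eval_X]
  have hkey : ∀ x : ℝ, β₀ + β₁ * x + β₂ * (x * x)
      = P.eval g₁ + α * (x - g₁) + c / 2 * ((x - g₁) * (x - g₂)) := by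
    intro x
    rw [hβ₀, hβ₁, hβ₂]
    ring
  have hWg₁ : W.eval g₁ = 0 := by rw [hWc, hkey]; ring
  have hWg₂ : W.eval g₂ = 0 := by
    rw [hWc, hkey, hα]
    field_simp
    ring
  have hWx₀ : W.eval x₀ = 0 := by
    rw [hWc, hkey, hc]
    field_simp
    ring
  have hroll : ∀ (Q : ℝ[X]) (a b : ℝ), a < b → Q.eval a = Q.eval b →
      ∃ ζ ∈ Set.Ioo a b, (derivative Q).eval ζ = 0 := by
    intro Q a b hab hQ
    obtain ⟨ζ, hζ, hζ0⟩ := exists_deriv_eq_zero hab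
      ((Polynomial.continuous Q).continuousOn) hQ
    refine ⟨ζ, hζ, ?_⟩
    rw [← Polynomial.deriv Q, hζ0]
  obtain ⟨ξ₁, hξ₁, hξ₁0⟩ := hroll W g₁ x₀ h1 (by rw [hWg₁, hWx₀])
  obtain ⟨ξ₂, hξ₂, hξ₂0⟩ := hroll W x₀ g₂ h2 (by rw [hWx₀, hWg₂])
  have hξξ : ξ₁ < ξ₂ := lt_trans hξ₁.2 hξ₂.1
  obtain ⟨ξ, hξ, hξ0⟩ := hroll (derivative W) ξ₁ ξ₂ hξξ (by rw [hξ₁0, hξ₂0])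
  refine ⟨ξ, ⟨lt_trans hξ₁.1 hξ.1, lt_trans hξ.2 hξ₂.2⟩, ?_⟩
  have hWdd : derivative (derivative W) = derivative^[2] P - C c := by
    have hone : (1 + 1 : ℝ[X]) = C 2 := by rw [show (2:ℝ) = 1+1 by norm_num, C_add, C_1]
    have d1 : derivative W = derivative P - (C β₁ + C β₂ * (X + X)) := by
      rw [hW]
      simp only [derivative_sub, derivative_add, derivative_mul, derivative_C, derivative_X,
        zero_mul, mul_one, one_mul, zero_add, add_zero]
    have d2 : derivative (derivative W) = derivative (derivative P) - C β₂ * (1 + 1) := by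
      rw [d1]
      simp only [derivative_sub, derivative_add, derivative_mul, derivative_C, derivative_X,
        zero_mul, mul_one, one_mul, zero_add, add_zero]
    have d3 : C β₂ * ((1 : ℝ[X]) + 1) = C c := by
      rw [hone, ← Polynomial.C_mul]
      congr 1
      rw [hβ₂]
      ring
    rw [d2, d3]
    rfl
  have hcξ : (derivative^[2] P).eval ξ = c := by
    have h := congr_arg (fun Q : ℝ[X] => Q.eval ξ) hWdd
    simp only [eval_sub, eval_C] at h
    rw [hξ0] at h
    linarith
  rw [hcξ, hc]
  field_simp
  ring

lemma sup_bound (D : ℕ) (hD : 2 ≤ D) (P : ℝ[X]) (hdeg : P.natDegree ≤ D) (S : ℝ) (hS : 0 ≤ S)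
    (hbound : ∀ n : ℕ, D ^ 2 ≤ n → |P.eval (1 / (n : ℝ))| ≤ S) :
    ∀ x ∈ Set.Icc (0:ℝ) (1 / (D:ℝ)^2), |P.eval x| ≤ 2 * S := by
  have hD1 : 1 ≤ D := le_trans one_le_two hD
  have hDr : (2:ℝ) ≤ (D:ℝ) := by exact_mod_cast hD
  set ℓ : ℝ := 1/(D:ℝ)^2 with hℓ
  have hℓpos : 0 < ℓ := by positivity
  obtain ⟨x₀, hx₀mem, hx₀max⟩ : ∃ x₀ ∈ Set.Icc (0:ℝ) ℓ,
      ∀ y ∈ Set.Icc (0:ℝ) ℓ, |P.eval y| ≤ |P.eval x₀| := by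
    obtain ⟨x₀, hmem, hmax⟩ := IsCompact.exists_isMaxOn isCompact_Icc
      (Set.nonempty_Icc.mpr hℓpos.le)
      ((continuous_abs.comp (Polynomial.continuous P)).continuousOn)
    exact ⟨x₀, hmem, fun y hy => hmax hy⟩
  set M : ℝ := |P.eval x₀| with hM
  have hMnn : 0 ≤ M := abs_nonneg _
  suffices h : M ≤ 2 * S by
    intro x hx
    exact le_trans (hx₀max x hx) h
  by_cases hx0 : x₀ = 0
  · -- limit argument
    have htend : Filter.Tendsto (fun n : ℕ => |P.eval (1/(n:ℝ))|) Filter.atTop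
        (nhds |P.eval 0|) := by
      have h0 : Filter.Tendsto (fun n : ℕ => 1/(n:ℝ)) Filter.atTop (nhds 0) :=
        tendsto_one_div_atTop_nhds_zero_nat
      exact (((Polynomial.continuous P).tendsto 0).comp h0).abs
    have hle : |P.eval 0| ≤ S := by
      apply le_of_tendsto htend
      rw [Filter.eventually_atTop]
      exact ⟨D^2, hbound⟩
    rw [hM, hx0]
    linarith
  have hx₀pos : 0 < x₀ := lt_of_le_of_ne hx₀mem.1 (Ne.symm hx0)
  have h1x : (D:ℝ)^2 ≤ 1/x₀ := by
    rw [le_div_iff₀ hx₀pos]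
    have h2 := hx₀mem.2
    rw [hℓ] at h2
    have hD2 : (0:ℝ) < (D:ℝ)^2 := by positivity
    calc (D:ℝ)^2 * x₀ ≤ (D:ℝ)^2 * (1/(D:ℝ)^2) := by
          apply mul_le_mul_of_nonneg_left h2 hD2.le
      _ = 1 := by field_simp
  set n : ℕ := ⌊1/x₀⌋₊ with hn
  have hnD : D^2 ≤ n := Nat.le_floor (by push_cast; exact h1x)
  set nn : ℝ := (n:ℝ) with hnn
  have hnrD : (D:ℝ)^2 ≤ nn := by rw [hnn]; exact_mod_cast hnD
  have hnnpos : 0 < nn := by nlinarith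
  have hnr : nn ≤ 1/x₀ := Nat.floor_le (by positivity)
  have hnr2 : 1/x₀ < nn + 1 := by
    rw [hnn, hn]
    exact_mod_cast Nat.lt_floor_add_one (1/x₀)
  set g₁ : ℝ := 1/(nn+1) with hg₁
  set g₂ : ℝ := 1/nn with hg₂
  have hg₁pos : 0 < g₁ := by rw [hg₁]; positivity
  have hg₂pos : 0 < g₂ := by rw [hg₂]; positivity
  have hg₁₂ : g₁ < g₂ := by
    rw [hg₁, hg₂]
    apply one_div_lt_one_div_of_lt hnnpos
    linarith
  have hxle : x₀ ≤ g₂ := by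
    rw [hg₂, le_div_iff₀ hnnpos]
    have := (le_div_iff₀ hx₀pos).mp hnr
    linarith
  have hg1lt : g₁ < x₀ := by
    rw [hg₁, div_lt_iff₀ (by linarith : (0:ℝ) < nn + 1)]
    have := (div_lt_iff₀ hx₀pos).mp hnr2
    linarith
  have hg₂ℓ : g₂ ≤ ℓ := by
    rw [hg₂, hℓ]
    apply one_div_le_one_div_of_le (by positivity) hnrD
  have hPg₂ : |P.eval g₂| ≤ S := by
    have := hbound n hnD
    rw [hg₂, hnn]
    exact this
  by_cases hxeq : x₀ = g₂
  · rw [hM, hxeq]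
    linarith
  have hxlt : x₀ < g₂ := lt_of_le_of_ne hxle hxeq
  have hPg₁ : |P.eval g₁| ≤ S := by
    have := hbound (n+1) (by omega)
    rw [hg₁, hnn]
    push_cast at this ⊢
    exact this
  obtain ⟨ξ, hξmem, hξeq⟩ := second_deriv_interp P g₁ g₂ x₀ hg1lt hxlt
  -- convex combination bound
  have h21pos : 0 < g₂ - g₁ := by linarith
  have hA : |P.eval g₁ + (P.eval g₂ - P.eval g₁)/(g₂-g₁) * (x₀ - g₁)| ≤ S := by
    have expand : P.eval g₁ + (P.eval g₂ - P.eval g₁)/(g₂-g₁) * (x₀ - g₁)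
        = ((g₂ - x₀) * P.eval g₁ + (x₀ - g₁) * P.eval g₂)/(g₂-g₁) := by
      field_simp
      ring
    rw [expand, abs_div, abs_of_pos h21pos, div_le_iff₀ h21pos]
    calc |(g₂ - x₀) * P.eval g₁ + (x₀ - g₁) * P.eval g₂|
        ≤ |(g₂ - x₀) * P.eval g₁| + |(x₀ - g₁) * P.eval g₂| := abs_add_le _ _
      _ = (g₂ - x₀) * |P.eval g₁| + (x₀ - g₁) * |P.eval g₂| := by
          rw [abs_mul, abs_mul, abs_of_pos (by linarith : (0:ℝ) < g₂ - x₀),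
            abs_of_pos (by linarith : (0:ℝ) < x₀ - g₁)]
      _ ≤ (g₂ - x₀) * S + (x₀ - g₁) * S := by
          apply add_le_add
          · exact mul_le_mul_of_nonneg_left hPg₁ (by linarith)
          · exact mul_le_mul_of_nonneg_left hPg₂ (by linarith)
      _ = S * (g₂ - g₁) := by ring
  -- Chebyshev constant for k = 2
  have hcheb2 : cheb1 D 2 ≤ (D:ℝ)^4/3 := by
    obtain ⟨h0, hb⟩ := cheb1_nonneg_le D 2 hD
    have h3 : ∏ j ∈ Finset.range 2, (2*(j:ℝ)+1) = 3 := by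
      rw [Finset.prod_range_succ, Finset.prod_range_succ, Finset.prod_range_zero]
      norm_num
    rw [h3] at hb
    have h4 : ((D:ℝ))^(2*2) = (D:ℝ)^4 := by norm_num
    rw [h4] at hb
    linarith
  have hcheb2nn : 0 ≤ cheb1 D 2 := (cheb1_nonneg_le D 2 hD).1
  set A2 : ℝ := |(derivative^[2] P).eval ξ| with hA2
  have hA2nn : 0 ≤ A2 := abs_nonneg _
  have hprodpos : 0 < (x₀ - g₁) * (g₂ - x₀) :=
    mul_pos (by linarith) (by linarith)
  have hgapval : g₂ - g₁ = 1/(nn*(nn+1)) := by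
    rw [hg₁, hg₂]
    field_simp
    ring
  have hprod : (x₀ - g₁) * (g₂ - x₀) ≤ (g₂ - g₁)^2/4 := by
    nlinarith [sq_nonneg ((x₀ - g₁) - (g₂ - x₀))]
  -- main error bound, two cases
  have herr : A2 * ((x₀ - g₁) * (g₂ - x₀)) ≤ M/3 := by
    rcases le_or_gt (nn+1) (2*(D:ℝ)^2) with hcase | hcase
    · -- window [ξ - g₁, ξ]
      have hwin : Set.Icc (ξ - g₁) ξ ⊆ Set.Icc (0:ℝ) ℓ := by
        apply Set.Icc_subset_Icc
        · have : g₁ < ξ := hξmem.1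
          linarith
        · have : ξ < g₂ := hξmem.2
          linarith
      have hP2 := markov_window D 2 hD1 hD P hdeg (ξ - g₁) ξ (by linarith)
        M (fun y hy => hx₀max y (hwin hy)) ξ (Or.inr rfl)
      rw [show ξ - (ξ - g₁) = g₁ by ring] at hP2
      have h2g : (2/g₁)^2 = 4*(nn+1)^2 := by
        rw [hg₁]
        field_simp
        ring
      rw [h2g] at hP2
      have hstep : A2 ≤ 4*(nn+1)^2 * ((D:ℝ)^4/3) * M := by
        calc A2 ≤ 4*(nn+1)^2 * cheb1 D 2 * M := hP2
          _ ≤ 4*(nn+1)^2 * ((D:ℝ)^4/3) * M := by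
            apply mul_le_mul_of_nonneg_right _ hMnn
            apply mul_le_mul_of_nonneg_left hcheb2 (by positivity)
      have e1 : A2 * ((x₀ - g₁) * (g₂ - x₀))
          ≤ (4*(nn+1)^2 * ((D:ℝ)^4/3) * M) * ((g₂ - g₁)^2/4) :=
        mul_le_mul hstep hprod hprodpos.le (by positivity)
      have e2 : (4*(nn+1)^2 * ((D:ℝ)^4/3) * M) * ((g₂ - g₁)^2/4)
          = (D:ℝ)^4/(nn^2*3) * M := by
        rw [hgapval]
        field_simp
      have e3 : (D:ℝ)^4/(nn^2*3) * M ≤ M/3 := by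
        have hd4 : (D:ℝ)^4 ≤ nn^2 := by nlinarith
        rw [div_mul_eq_mul_div, div_le_div_iff₀ (by positivity) (by norm_num)]
        nlinarith
      linarith
    · -- n ≥ 2 D^2 ; window [ξ, ξ + ℓ/2]
      have hn2 : 2*(D:ℝ)^2 ≤ nn := by
        have hc : 2*D^2 < n + 1 := by exact_mod_cast (by push_cast; linarith : (2*D^2 : ℝ) < (n:ℝ)+1)
        have : 2*D^2 ≤ n := by omega
        rw [hnn]
        exact_mod_cast this
      have hg₂half : g₂ ≤ ℓ/2 := by
        have hll : ℓ/2 = 1/((D:ℝ)^2*2) := by rw [hℓ, div_div]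
        rw [hg₂, hll]
        exact one_div_le_one_div_of_le (by positivity) (by linarith)
      have hwin : Set.Icc ξ (ξ + ℓ/2) ⊆ Set.Icc (0:ℝ) ℓ := by
        apply Set.Icc_subset_Icc
        · have : g₁ < ξ := hξmem.1
          linarith
        · have : ξ < g₂ := hξmem.2
          linarith
      have hP2 := markov_window D 2 hD1 hD P hdeg ξ (ξ + ℓ/2) (by linarith)
        M (fun y hy => hx₀max y (hwin hy)) ξ (Or.inl rfl)
      rw [show ξ + ℓ/2 - ξ = ℓ/2 by ring] at hP2
      have h2g : (2/(ℓ/2))^2 = 16*(D:ℝ)^4 := by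
        rw [hℓ]
        field_simp
        ring
      rw [h2g] at hP2
      have hstep : A2 ≤ 16*(D:ℝ)^4 * ((D:ℝ)^4/3) * M := by
        calc A2 ≤ 16*(D:ℝ)^4 * cheb1 D 2 * M := hP2
          _ ≤ 16*(D:ℝ)^4 * ((D:ℝ)^4/3) * M := by
            apply mul_le_mul_of_nonneg_right _ hMnn
            apply mul_le_mul_of_nonneg_left hcheb2 (by positivity)
      have hgap2 : (g₂ - g₁)^2 ≤ 1/(16*(D:ℝ)^8) := by
        rw [hgapval]
        rw [div_pow, one_pow, div_le_div_iff₀ (by positivity) (by positivity)]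
        have h1 : 4*(D:ℝ)^4 ≤ nn*(nn+1) := by nlinarith
        nlinarith [sq_nonneg (nn*(nn+1))]
      have e1 : A2 * ((x₀ - g₁) * (g₂ - x₀))
          ≤ (16*(D:ℝ)^4 * ((D:ℝ)^4/3) * M) * ((g₂ - g₁)^2/4) :=
        mul_le_mul hstep hprod hprodpos.le (by positivity)
      have e2 : (16*(D:ℝ)^4 * ((D:ℝ)^4/3) * M) * ((g₂ - g₁)^2/4)
          ≤ (16*(D:ℝ)^4 * ((D:ℝ)^4/3) * M) * (1/(16*(D:ℝ)^8)/4) := by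
        apply mul_le_mul_of_nonneg_left _ (by positivity)
        linarith
      have e3 : (16*(D:ℝ)^4 * ((D:ℝ)^4/3) * M) * (1/(16*(D:ℝ)^8)/4) = M/12 := by
        field_simp
        ring
      have e4 : M/12 ≤ M/3 := by linarith
      linarith
  -- combine
  have habsterm : |(derivative^[2] P).eval ξ / 2 * ((x₀ - g₁) * (x₀ - g₂))|
      = A2/2 * ((x₀ - g₁) * (g₂ - x₀)) := by
    rw [abs_mul, abs_mul, abs_div, abs_two,
      abs_of_pos (by linarith : (0:ℝ) < x₀ - g₁),
      abs_of_neg (by linarith : x₀ - g₂ < 0)]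
    rw [hA2]
    ring
  have hfinal : M ≤ S + M/6 := by
    calc M = |P.eval x₀| := hM
      _ = |P.eval g₁ + (P.eval g₂ - P.eval g₁)/(g₂-g₁) * (x₀ - g₁)
          + (derivative^[2] P).eval ξ / 2 * ((x₀ - g₁) * (x₀ - g₂))| := by rw [← hξeq]
      _ ≤ |P.eval g₁ + (P.eval g₂ - P.eval g₁)/(g₂-g₁) * (x₀ - g₁)|
          + |(derivative^[2] P).eval ξ / 2 * ((x₀ - g₁) * (x₀ - g₂))| := abs_add_le _ _
      _ ≤ S + A2/2 * ((x₀ - g₁) * (g₂ - x₀)) := by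
          rw [habsterm]
          exact add_le_add_left hA _
      _ ≤ S + M/6 := by
          apply add_le_add_right
          linarith
  linarith

lemma iteratedDeriv_poly (p : ℝ[X]) (k : ℕ) :
    iteratedDeriv k (fun s => p.eval s) = fun t => (derivative^[k] p).eval t := by
  induction k with
  | zero => simp [iteratedDeriv_zero]
  | succ k ih =>
    rw [iteratedDeriv_succ, ih]
    funext t
    rw [Function.iterate_succ_apply']
    exact Polynomial.deriv _

lemma prod_Icc_eq_range (k : ℕ) :
    ∏ j ∈ Finset.Icc 1 k, (2*(j:ℝ) - 1) = ∏ j ∈ Finset.range k, (2*(j:ℝ)+1) := by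
  induction k with
  | zero => simp
  | succ k ih =>
    rw [Finset.prod_Icc_succ_top (by omega), ih, Finset.prod_range_succ]
    push_cast
    ring

end Stmt2Aux

/-- Markov-brothers type bound: if `P` has degree at most `D ≥ 1`, `1 ≤ k ≤ D`, and
`|P(1/n)| ≤ S` for all integers `n ≥ D²`, then for `t ∈ [0, 1/(2D²)]`,
`|P^{(k)}(t)| ≤ (2^(2k+1) D^(4k) / (2k-1)!!) * S`. -/
theorem stmt2 (P : Polynomial ℝ) (D k : ℕ) (hD : 1 ≤ D) (hdeg : P.natDegree ≤ D)
    (hk1 : 1 ≤ k) (hkD : k ≤ D) (S : ℝ) (hS : 0 ≤ S)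
    (hbound : ∀ n : ℕ, D ^ 2 ≤ n → |P.eval (1 / (n : ℝ))| ≤ S) :
    ∀ t ∈ Set.Icc (0 : ℝ) (1 / (2 * (D : ℝ) ^ 2)),
      |iteratedDeriv k (fun s => P.eval s) t| ≤
        (2 ^ (2 * k + 1) * (D : ℝ) ^ (4 * k) / ∏ j ∈ Finset.Icc 1 k, (2 * (j : ℝ) - 1)) * S := by
  intro t ht
  rw [Stmt2Aux.iteratedDeriv_poly P k]
  simp only
  rcases eq_or_lt_of_le hD with hD1 | hD2
  · -- case D = 1
    have hDeq : D = 1 := hD1.symm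
    subst hDeq
    have hkeq : k = 1 := le_antisymm hkD hk1
    subst hkeq
    have hrep := Polynomial.eq_X_add_C_of_natDegree_le_one hdeg
    have h1 := hbound 1 (by norm_num)
    have h2 := hbound 2 (by norm_num)
    rw [hrep] at h1 h2
    simp only [eval_add, eval_mul, eval_C, eval_X, Nat.cast_one, Nat.cast_ofNat] at h1 h2
    have hda : (derivative^[1] P).eval t = P.coeff 1 := by
      conv_lhs => rw [Function.iterate_one, hrep]
      simp
    rw [hda]
    obtain ⟨ha1, ha2⟩ := abs_le.mp h1
    obtain ⟨hb1, hb2⟩ := abs_le.mp h2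
    have hRHS : (2:ℝ) ^ (2 * 1 + 1) * ((1:ℕ) : ℝ) ^ (4 * 1)
        / (∏ j ∈ Finset.Icc (1:ℕ) 1, (2 * (j : ℝ) - 1)) * S = 8 * S := by
      rw [Finset.Icc_self, Finset.prod_singleton]
      norm_num
    rw [hRHS]
    have : |P.coeff 1| ≤ 4 * S := by
      apply abs_le.mpr
      constructor
      · have : P.coeff 1 * (1/1) + P.coeff 0 ≥ -S := by
          norm_num at h1 ⊢
          linarith
        norm_num at h1 h2 ⊢
        linarith
      · norm_num at h1 h2 ⊢
        linarith
    linarith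
  · -- case 2 ≤ D
    have hD2' : 2 ≤ D := hD2
    have hDrpos : (0:ℝ) < (D:ℝ) := by positivity
    have hboot := Stmt2Aux.sup_bound D hD2' P hdeg S hS hbound
    set b : ℝ := t + 1/(2*(D:ℝ)^2) with hb
    have hblen : (0:ℝ) < 1/(2*(D:ℝ)^2) := by positivity
    have htb : t < b := by rw [hb]; linarith
    have hsub : Set.Icc t b ⊆ Set.Icc (0:ℝ) (1/(D:ℝ)^2) := by
      apply Set.Icc_subset_Icc ht.1
      rw [hb]
      have h2 := ht.2
      have : 1/(2*(D:ℝ)^2) + 1/(2*(D:ℝ)^2) = 1/(D:ℝ)^2 := by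
        field_simp
        ring
      linarith
    have hMw := Stmt2Aux.markov_window D k hD hkD P hdeg t b htb (2*S)
      (fun y hy => hboot y (hsub hy)) t (Or.inl rfl)
    have hbt : 2/(b - t) = 4*(D:ℝ)^2 := by
      rw [hb]
      have : t + 1/(2*(D:ℝ)^2) - t = 1/(2*(D:ℝ)^2) := by ring
      rw [this]
      field_simp
      ring
    rw [hbt] at hMw
    obtain ⟨hc0, hcb⟩ := Stmt2Aux.cheb1_nonneg_le D k hkD
    set Pk : ℝ := ∏ j ∈ Finset.range k, (2*(j:ℝ)+1) with hPk
    have hPkpos : 0 < Pk := Finset.prod_pos fun i _ => by positivity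
    have hcheb : Stmt2Aux.cheb1 D k ≤ (D:ℝ)^(2*k)/Pk := (le_div_iff₀ hPkpos).mpr hcb
    rw [Stmt2Aux.prod_Icc_eq_range, ← hPk]
    calc |(derivative^[k] P).eval t| ≤ (4*(D:ℝ)^2)^k * Stmt2Aux.cheb1 D k * (2*S) := hMw
      _ ≤ (4*(D:ℝ)^2)^k * ((D:ℝ)^(2*k)/Pk) * (2*S) := by
          apply mul_le_mul_of_nonneg_right _ (by linarith)
          exact mul_le_mul_of_nonneg_left hcheb (by positivity)
      _ = 2 ^ (2*k+1) * (D:ℝ)^(4*k) / Pk * S := by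
          rw [show (4*(D:ℝ)^2)^k = 4^k * ((D:ℝ)^2)^k from mul_pow _ _ _,
            show ((4:ℝ))^k = 2^(2*k) by rw [pow_mul]; norm_num,
            show (((D:ℝ))^2)^k = (D:ℝ)^(2*k) from (pow_mul _ 2 k).symm]
          rw [pow_succ, pow_mul]
          field_simp
          ring
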